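/- arXiv:2401.04378 — 2 statements merged into one kernel-verified Lean document; each statement's English description precedes it below -/
import Mathlib

section
/- Let r > 0, α > 0, c > 0, λ > 0, μ > 0, μ_A > 0, and φ₀ ≠ 0 be real numbers. Let f₁t, a₁t : (0,∞) → ℝ be continuous with f₁t bounded, and set L(s) = c − λ μ f₁t(s) (extended continuously to [0,∞)) and M(s) = (λ μ_A / φ₀) a₁t(s) − λ μ f₁t(s). Let z : (0,∞) → ℝ be differentiable, bounded, and satisfy −r z′(s) + (L(s) − α/s) z(s) = M(s) − α/s for all s > 0, with z(s) s^{α/r} exp(−(1/r) ∫₀^s L(t) dt) → 0 as s → ∞. Assume the functions t ↦ a₁t(t) t^{α/r} exp(−(1/r) ∫₀^t L(v) dv) and t ↦ (λ μ f₁t(t) t + α) t^{α/r − 1} exp(−(1/r) ∫₀^t L(v) dv) are integrable on (0,∞), with I₂ = ∫₀^∞ (λ μ f₁t(t) t + α) t^{α/r − 1} exp(−(1/r) ∫₀^t L(v) dv) dt ≠ 0. Then φ₀ = λ μ_A I₁ / I₂, where I₁ = ∫₀^∞ a₁t(t) t^{α/r} exp(−(1/r) ∫₀^t (c − λ μ f₁t(v))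 dv) dt. -/
open MeasureTheory Set Real Filter

/-- Closed-form expression for the initial value `φ₀ = Φ_∞(0)` of the
Gerber–Shiu function without a dividend barrier: letting `s → 0` in the
integrated representation of the Laplace-transformed equation yields
`φ₀ = λ μ_A I₁ / I₂`. -/
theorem gerber_shiu_initial_value_formula
    (r alpha c lam mu muA phi0 : ℝ)
    (hr : 0 < r) (halpha : 0 < alpha) (hc : 0 < c) (hlam : 0 < lam)
    (hmu : 0 < mu) (hmuA : 0 < muA) (hphi0 : phi0 ≠ 0)
    (f₁t a₁t L M z zd : ℝ → ℝ)
    (hf₁tcont : ContinuousOn f₁t (Ioi 0))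
    (ha₁tcont : ContinuousOn a₁t (Ioi 0))
    (hf₁tbdd : ∃ C, ∀ s ∈ Ioi (0:ℝ), |f₁t s| ≤ C)
    (hLcont : ContinuousOn L (Ici 0))
    (hLdef : ∀ s ∈ Ioi (0:ℝ), L s = c - lam * mu * f₁t s)
    (hMdef : ∀ s ∈ Ioi (0:ℝ), M s = (lam * muA / phi0) * a₁t s - lam * mu * f₁t s)
    (hz : ∀ s ∈ Ioi (0:ℝ), HasDerivAt z (zd s) s)
    (hzbdd : ∃ C, ∀ s ∈ Ioi (0:ℝ), |z s| ≤ C)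
    (hode : ∀ s ∈ Ioi (0:ℝ),
      -r * zd s + (L s - alpha / s) * z s = M s - alpha / s)
    (hElim : Tendsto
      (fun s => z s * s ^ (alpha / r)
        * Real.exp (-(1 / r) * ∫ t in (0:ℝ)..s, L t)) atTop (nhds 0))
    (hI₁int : IntegrableOn
      (fun t => a₁t t * t ^ (alpha / r)
        * Real.exp (-(1 / r) * ∫ v in (0:ℝ)..t, L v)) (Ioi 0))
    (hI₂int : IntegrableOn
      (fun t => (lam * mu * f₁t t * t + alpha) * t ^ (alpha / r - 1)
        * Real.exp (-(1 / r) * ∫ v in (0:ℝ)..t, L v)) (Ioi 0))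
    (hI₂ne : (∫ t in Ioi (0:ℝ),
        (lam * mu * f₁t t * t + alpha) * t ^ (alpha / r - 1)
          * Real.exp (-(1 / r) * ∫ v in (0:ℝ)..t, L v)) ≠ 0) :
    phi0 = lam * muA
        * (∫ t in Ioi (0:ℝ),
            a₁t t * t ^ (alpha / r)
              * Real.exp (-(1 / r) * ∫ v in (0:ℝ)..t, c - lam * mu * f₁t v))
        / ∫ t in Ioi (0:ℝ),
            (lam * mu * f₁t t * t + alpha) * t ^ (alpha / r - 1)
              * Real.exp (-(1 / r) * ∫ v in (0:ℝ)..t, L v) := by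
  -- notation
  set p : ℝ := alpha / r with hp
  have hppos : 0 < p := div_pos halpha hr
  clear_value p
  have hrne : r ≠ 0 := hr.ne'
  set E : ℝ → ℝ := fun s => Real.exp (-(1 / r) * ∫ v in (0:ℝ)..s, L v) with hE
  set g : ℝ → ℝ := fun s => z s * s ^ p * E s with hg
  set f' : ℝ → ℝ := fun t =>
      (1 / r) * ((lam * mu * f₁t t * t + alpha) * t ^ (p - 1) * E t)
        - (lam * muA / (r * phi0)) * (a₁t t * t ^ p * E t) with hf'
  -- derivative of g on Ioi 0
  have hderiv : ∀ s ∈ Ioi (0:ℝ), HasDerivAt g (f' s) s := by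
    intro s hs
    have hs0 : (0:ℝ) < s := hs
    have hsne : s ≠ 0 := hs0.ne'
    have h1 : HasDerivAt z (zd s) s := hz s hs
    have h2 : HasDerivAt (fun x : ℝ => x ^ p) (p * s ^ (p - 1)) s :=
      Real.hasDerivAt_rpow_const (Or.inl hsne)
    have hLint : IntervalIntegrable L volume 0 s := by
      apply ContinuousOn.intervalIntegrable
      apply hLcont.mono
      rw [uIcc_of_le hs0.le]
      exact fun x hx => hx.1
    have hLca : ContinuousAt L s := hLcont.continuousAt (Ici_mem_nhds hs0)
    have hLmeas : StronglyMeasurableAtFilter L (nhds s) := by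
      refine ⟨Ioi 0, Ioi_mem_nhds hs0, ?_⟩
      exact ((hLcont.mono (Ioi_subset_Ici le_rfl)).aemeasurable measurableSet_Ioi).aestronglyMeasurable
    have h3 : HasDerivAt (fun x : ℝ => ∫ v in (0:ℝ)..x, L v) (L s) s :=
      intervalIntegral.integral_hasDerivAt_right hLint hLmeas hLca
    have h4 : HasDerivAt E (E s * (-(1 / r) * L s)) s := by
      have := (h3.const_mul (-(1 / r))).exp
      simpa [hE, mul_comm] using this
    have h5 : HasDerivAt g
        ((zd s * s ^ p + z s * (p * s ^ (p - 1))) * E s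
          + z s * s ^ p * (E s * (-(1 / r) * L s))) s := (h1.mul h2).mul h4
    convert h5 using 1
    have hzd : r * zd s = (L s - alpha / s) * z s - (M s - alpha / s) := by
      have := hode s hs
      linarith
    have hM := hMdef s hs
    have hsp1 : s ^ (p - 1) = s ^ p / s := by
      rw [Real.rpow_sub hs0, Real.rpow_one]
    rw [hM] at hzd
    have hzds : zd s = ((L s - alpha / s) * z s
        - (lam * muA / phi0 * a₁t s - lam * mu * f₁t s - alpha / s)) / r := by
      rw [eq_div_iff hrne]; linarith
    show f' s = _
    rw [hf']
    simp only [hsp1]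
    rw [hp, hzds]
    field_simp
    ring
  -- continuity at 0 from the right
  have hg0 : g 0 = 0 := by
    simp [hg, Real.zero_rpow hppos.ne']
  have hcont : ContinuousWithinAt g (Ici 0) 0 := by
    rw [← Ioi_insert, continuousWithinAt_insert_self]
    rw [ContinuousWithinAt, hg0]
    obtain ⟨C, hC⟩ := hzbdd
    have hC0 : 0 ≤ C := (abs_nonneg _).trans (hC 1 (by norm_num))
    obtain ⟨K, hK⟩ := (isCompact_Icc (a := (0:ℝ)) (b := 1)).exists_bound_of_continuousOn
      (hLcont.mono (fun x hx => hx.1))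
    have hK0 : 0 ≤ K := (norm_nonneg _).trans (hK 0 (by norm_num))
    have hbound : ∀ᶠ s in nhdsWithin 0 (Ioi 0), ‖g s‖ ≤ C * Real.exp (K / r) * s ^ p := by
      filter_upwards [Ioc_mem_nhdsGT (by norm_num : (0:ℝ) < 1)] with s hs
      have hs0 : (0:ℝ) < s := hs.1
      have hint : ‖∫ v in (0:ℝ)..s, L v‖ ≤ K * |s - 0| := by
        apply intervalIntegral.norm_integral_le_of_norm_le_const
        intro x hx
        rw [uIoc_of_le hs0.le] at hx
        exact hK x ⟨hx.1.le, hx.2.trans hs.2⟩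
      have hEle : E s ≤ Real.exp (K / r) := by
        apply Real.exp_le_exp.2
        have h1 : -(1 / r) * ∫ v in (0:ℝ)..s, L v ≤ (1 / r) * ‖∫ v in (0:ℝ)..s, L v‖ := by
          have := neg_abs_le (∫ v in (0:ℝ)..s, L v)
          have h1r : 0 < 1 / r := by positivity
          rw [Real.norm_eq_abs]
          nlinarith [abs_nonneg (∫ v in (0:ℝ)..s, L v)]
        refine h1.trans ?_
        rw [div_eq_mul_inv K r, mul_comm K r⁻¹, ← one_div]
        have : ‖∫ v in (0:ℝ)..s, L v‖ ≤ K := by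
          have := hint
          rw [sub_zero, abs_of_pos hs0] at this
          nlinarith [hs.2]
        nlinarith [this, (by positivity : (0:ℝ) < 1 / r)]
      have hEpos : 0 < E s := Real.exp_pos _
      have hsp : 0 ≤ s ^ p := Real.rpow_nonneg hs0.le p
      calc ‖g s‖ = |z s| * (s ^ p) * E s := by
            rw [hg]
            simp only [Real.norm_eq_abs, abs_mul]
            rw [abs_of_nonneg hsp, abs_of_pos hEpos]
        _ ≤ C * (s ^ p) * Real.exp (K / r) := by
            apply mul_le_mul (mul_le_mul_of_nonneg_right (hC s hs0) hsp) hEle hEpos.le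
            positivity
        _ = C * Real.exp (K / r) * s ^ p := by ring
    have hlim : Tendsto (fun s : ℝ => C * Real.exp (K / r) * s ^ p)
        (nhdsWithin 0 (Ioi 0)) (nhds 0) := by
      have h0 : Tendsto (fun s : ℝ => s ^ p) (nhds 0) (nhds ((0:ℝ) ^ p)) :=
        (Real.continuousAt_rpow_const 0 p (Or.inr hppos.le)).tendsto
      rw [Real.zero_rpow hppos.ne'] at h0
      have := (h0.const_mul (C * Real.exp (K / r))).mono_left
        (nhdsWithin_le_nhds (s := Ioi (0:ℝ)))
      simpa using this
    exact squeeze_zero_norm' hbound hlim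
  -- integrability of f'
  have hint : IntegrableOn f' (Ioi 0) :=
    (hI₂int.const_mul (1 / r)).sub (hI₁int.const_mul (lam * muA / (r * phi0)))
  -- FTC on (0, ∞)
  have key : ∫ t in Ioi (0:ℝ), f' t = 0 - g 0 :=
    MeasureTheory.integral_Ioi_of_hasDerivAt_of_tendsto hcont hderiv hint hElim
  rw [hg0, sub_zero] at key
  have hsplit : ∫ t in Ioi (0:ℝ), f' t =
      (1 / r) * (∫ t in Ioi (0:ℝ),
          (lam * mu * f₁t t * t + alpha) * t ^ (p - 1) * E t)
        - (lam * muA / (r * phi0)) * (∫ t in Ioi (0:ℝ), a₁t t * t ^ p * E t) := by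
    rw [hf']
    rw [MeasureTheory.integral_sub (hI₂int.const_mul (1 / r))
      (hI₁int.const_mul (lam * muA / (r * phi0)))]
    rw [MeasureTheory.integral_const_mul, MeasureTheory.integral_const_mul]
  rw [hsplit] at key
  -- rewrite the I₁ integrand in the goal
  have hI1eq : (∫ t in Ioi (0:ℝ),
      a₁t t * t ^ p
        * Real.exp (-(1 / r) * ∫ v in (0:ℝ)..t, c - lam * mu * f₁t v))
      = ∫ t in Ioi (0:ℝ), a₁t t * t ^ p * E t := by
    apply MeasureTheory.setIntegral_congr_fun measurableSet_Ioi
    intro t ht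
    have ht0 : (0:ℝ) < t := ht
    show a₁t t * t ^ p * Real.exp (-(1 / r) * ∫ v in (0:ℝ)..t, c - lam * mu * f₁t v)
      = a₁t t * t ^ p * E t
    have : (∫ v in (0:ℝ)..t, c - lam * mu * f₁t v) = ∫ v in (0:ℝ)..t, L v := by
      rw [intervalIntegral.integral_of_le ht0.le, intervalIntegral.integral_of_le ht0.le]
      apply MeasureTheory.setIntegral_congr_fun measurableSet_Ioc
      intro v hv
      exact (hLdef v hv.1).symm
    rw [this]
  rw [hI1eq]

  -- conclude
  set I₁ : ℝ := ∫ t in Ioi (0:ℝ), a₁t t * t ^ p * E t with hI₁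
  set I₂ : ℝ := ∫ t in Ioi (0:ℝ),
      (lam * mu * f₁t t * t + alpha) * t ^ (p - 1) * E t with hI₂
  have hI₂ne' : I₂ ≠ 0 := hI₂ne
  have key2 : phi0 * I₂ = lam * muA * I₁ := by
    have h1 : r * phi0 * ((1 / r) * I₂ - lam * muA / (r * phi0) * I₁) = 0 := by
      rw [key]; ring
    field_simp at h1
    have h2 : r * (phi0 * I₂ - lam * muA * I₁) = 0 := by rw [h1, mul_zero]
    have h3 : r * (phi0 * I₂) = r * (lam * muA * I₁) := by linear_combination h2
    exact mul_left_cancel₀ hrne h3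
  field_simp
  linear_combination key2
end

section
/- Let c > 0, r ≥ 0, λ > 0, α ≥ 0, μ > 0, μ_A > 0, and φ₀ ≠ 0. Let f₁ : (0,∞) → [0,∞) be integrable with ∫₀^∞ f₁ = 1, F₁(u) = ∫₀^u f₁(y) dy, let A : [0,∞) → [0,∞) be integrable with ∫₀^∞ A(t) dt = μ_A, and A₁(u) = (1/μ_A) ∫₀^u A(t) dt. Suppose Z : [0,∞) → ℝ is continuously differentiable with Z(0) = 0 and Z, Z′ bounded, and satisfies for all u ≥ 0: (c + ru) Z(u) = (r + α) ∫₀^u Z(t) dt − α u + (λ μ_A / φ₀) A₁(u) − λ μ F₁(u) + λ μ ∫₀^u Z(u−y) f₁(y) dy. For s > 0 let z(s) = ∫₀^∞ e^{−su} Z′(u) du, f₁t(s) = ∫₀^∞ e^{−su} f₁(u) du, and a₁t(s) = (1/μ_A) ∫₀^∞ e^{−su} A(u) du. Then z is differentiable on (0,∞) and for all s > 0: c z(s) − r z′(s) = (α/s) z(s) − α/s + (λ μ_A / φ₀) a₁t(s) − λ μ f₁t(s) + λ μ f₁t(s) z(s). -/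
open MeasureTheory Set Real

lemma lap_aux_int_bdd {s C : ℝ} (hs : 0 < s) {g : ℝ → ℝ}
    (hm : AEStronglyMeasurable g (volume.restrict (Ioi 0)))
    (hb : ∀ u ∈ Ioi (0:ℝ), |g u| ≤ C) :
    IntegrableOn (fun u => Real.exp (-s * u) * g u) (Ioi 0) := by
  refine Integrable.mono' ((exp_neg_integrableOn_Ioi 0 hs).const_mul C) ?_ ?_
  · exact ((Real.continuous_exp.comp (continuous_const.mul continuous_id)).aestronglyMeasurable).mul hm
  · filter_upwards [ae_restrict_mem measurableSet_Ioi] with u hu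
    have h1 : ‖Real.exp (-s * u) * g u‖ = Real.exp (-s * u) * |g u| := by
      rw [norm_mul, Real.norm_eq_abs, Real.norm_eq_abs, abs_of_pos (Real.exp_pos _)]
    rw [h1, mul_comm C]
    exact mul_le_mul_of_nonneg_left (hb u hu) (Real.exp_pos _).le

lemma lap_key_wt {s : ℝ} (hs : 0 < s) {u : ℝ} (hu : 0 ≤ u) :
    u * Real.exp (-(s / 2) * u) ≤ 2 / s := by
  have hE : (0:ℝ) < Real.exp ((s / 2) * u) := Real.exp_pos _
  have h1 : (s / 2) * u ≤ Real.exp ((s / 2) * u) := by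
    have := Real.add_one_le_exp ((s / 2) * u); linarith
  have h2 : u ≤ 2 / s * Real.exp ((s / 2) * u) := by
    rw [div_mul_eq_mul_div, le_div_iff₀ hs]
    nlinarith
  have h3 : Real.exp (-(s / 2) * u) = (Real.exp ((s / 2) * u))⁻¹ := by
    rw [← Real.exp_neg]; ring_nf
  rw [h3]
  calc u * (Real.exp ((s / 2) * u))⁻¹
      ≤ (2 / s * Real.exp ((s / 2) * u)) * (Real.exp ((s / 2) * u))⁻¹ := by
        exact mul_le_mul_of_nonneg_right h2 (inv_nonneg.mpr hE.le)
    _ = 2 / s := by rw [mul_assoc, mul_inv_cancel₀ hE.ne', mul_one]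

lemma lap_aux_int_wt {s C : ℝ} (hs : 0 < s) {g : ℝ → ℝ}
    (hm : AEStronglyMeasurable g (volume.restrict (Ioi 0)))
    (hb : ∀ u ∈ Ioi (0:ℝ), |g u| ≤ C) :
    IntegrableOn (fun u => Real.exp (-s * u) * (u * g u)) (Ioi 0) := by
  set Cm := max C 0 with hCm
  have hCm0 : (0:ℝ) ≤ Cm := le_max_right _ _
  refine Integrable.mono'
    (((exp_neg_integrableOn_Ioi 0 (half_pos hs)).const_mul (Cm * (2 / s))) :
      Integrable (fun u => Cm * (2 / s) * Real.exp (-(s/2) * u)) _) ?_ ?_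
  · exact ((Real.continuous_exp.comp (continuous_const.mul continuous_id)).aestronglyMeasurable).mul
      (continuous_id.aestronglyMeasurable.mul hm)
  · filter_upwards [ae_restrict_mem measurableSet_Ioi] with u hu
    have hu0 : (0:ℝ) < u := hu
    have habs : |g u| ≤ Cm := (hb u hu).trans (le_max_left _ _)
    have h1 : ‖Real.exp (-s * u) * (u * g u)‖ = Real.exp (-s * u) * (u * |g u|) := by
      rw [norm_mul, Real.norm_eq_abs, Real.norm_eq_abs, abs_of_pos (Real.exp_pos _), abs_mul,
        abs_of_pos hu0]
    rw [h1]
    have hsplit : Real.exp (-s * u) = Real.exp (-(s/2) * u) * Real.exp (-(s/2) * u) := by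
      rw [← Real.exp_add]; ring_nf
    have hkey := lap_key_wt hs hu0.le
    calc Real.exp (-s * u) * (u * |g u|)
        ≤ Real.exp (-s * u) * (u * Cm) :=
          mul_le_mul_of_nonneg_left (mul_le_mul_of_nonneg_left habs hu0.le) (Real.exp_pos _).le
      _ = Cm * (u * Real.exp (-(s/2) * u)) * Real.exp (-(s/2) * u) := by rw [hsplit]; ring
      _ ≤ Cm * (2 / s) * Real.exp (-(s/2) * u) := by
          have := mul_le_mul_of_nonneg_left hkey hCm0
          exact mul_le_mul_of_nonneg_right this (Real.exp_pos _).le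

lemma lap_integral_exp {s : ℝ} (hs : 0 < s) :
    ∫ x in Ioi (0:ℝ), Real.exp (-s * x) = 1 / s := by
  have h := MeasureTheory.integral_comp_mul_left_Ioi (fun x => Real.exp (-x)) 0 hs
  simp only [mul_zero, integral_exp_neg_Ioi, neg_zero, Real.exp_zero, smul_eq_mul, mul_one] at h
  simp_rw [neg_mul] at h ⊢
  rw [h, one_div]

lemma lap_conv {s : ℝ} {φ ψ : ℝ → ℝ}
    (hφ : IntegrableOn (fun t => Real.exp (-s * t) * φ t) (Ioi 0))
    (hψ : IntegrableOn (fun t => Real.exp (-s * t) * ψ t) (Ioi 0)) :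
    ∫ x in Ioi (0:ℝ), Real.exp (-s * x) * ∫ t in (0:ℝ)..x, φ t * ψ (x - t)
      = (∫ t in Ioi (0:ℝ), Real.exp (-s * t) * φ t) *
        (∫ t in Ioi (0:ℝ), Real.exp (-s * t) * ψ t) := by
  have h := integral_posConvolution hφ hψ (ContinuousLinearMap.mul ℝ ℝ)
  simp only [ContinuousLinearMap.mul_apply'] at h
  rw [← h]
  refine setIntegral_congr_fun measurableSet_Ioi fun x hx => ?_
  rw [← intervalIntegral.integral_const_mul]
  refine intervalIntegral.integral_congr fun t ht => ?_
  have h2 : Real.exp (-s * t) * Real.exp (-s * (x - t)) = Real.exp (-s * x) := by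
    rw [← Real.exp_add]; ring_nf
  calc Real.exp (-s * x) * (φ t * ψ (x - t))
      = (Real.exp (-s * t) * Real.exp (-s * (x - t))) * (φ t * ψ (x - t)) := by rw [h2]
    _ = Real.exp (-s * t) * φ t * (Real.exp (-s * (x - t)) * ψ (x - t)) := by ring

lemma lap_conv_int {s : ℝ} {φ ψ : ℝ → ℝ}
    (hφ : IntegrableOn (fun t => Real.exp (-s * t) * φ t) (Ioi 0))
    (hψ : IntegrableOn (fun t => Real.exp (-s * t) * ψ t) (Ioi 0)) :
    IntegrableOn (fun x => Real.exp (-s * x) * ∫ t in (0:ℝ)..x, φ t * ψ (x - t)) (Ioi 0) := by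
  have h := integrable_posConvolution hφ hψ (ContinuousLinearMap.mul ℝ ℝ)
  rw [posConvolution, integrable_indicator_iff measurableSet_Ioi] at h
  refine h.congr_fun (fun x hx => ?_) measurableSet_Ioi
  simp only [ContinuousLinearMap.mul_apply']
  rw [← intervalIntegral.integral_const_mul]
  refine intervalIntegral.integral_congr fun t ht => ?_
  have h2 : Real.exp (-s * t) * Real.exp (-s * (x - t)) = Real.exp (-s * x) := by
    rw [← Real.exp_add]; ring_nf
  calc Real.exp (-s * t) * φ t * (Real.exp (-s * (x - t)) * ψ (x - t))
      = (Real.exp (-s * t) * Real.exp (-s * (x - t))) * (φ t * ψ (x - t)) := by ring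
    _ = Real.exp (-s * x) * (φ t * ψ (x - t)) := by rw [h2]

/-- Taking Laplace transforms of the integrated equation for the auxiliary
function `Z` yields the first-order linear ODE
`c z(s) − r z′(s) = (α/s) z(s) − α/s + (λμ_A/φ₀) ã₁(s) − λμ f̃₁(s) + λμ f̃₁(s) z(s)`
for the Laplace–Stieltjes transform `z` of `Z`. -/
theorem laplace_transform_ode_for_z
    (c r lam alpha mu muA phi0 : ℝ)
    (hc : 0 < c) (hr : 0 ≤ r) (hlam : 0 < lam) (halpha : 0 ≤ alpha)
    (hmu : 0 < mu) (hmuA : 0 < muA) (hphi0 : phi0 ≠ 0)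
    (f₁ F₁ A A₁ Z Zd z f₁t a₁t : ℝ → ℝ)
    (hf₁ : IntegrableOn f₁ (Ioi 0))
    (hf₁nonneg : ∀ y ∈ Ioi (0:ℝ), 0 ≤ f₁ y)
    (hf₁prob : (∫ y in Ioi (0:ℝ), f₁ y) = 1)
    (hF₁ : ∀ u, F₁ u = ∫ y in (0:ℝ)..u, f₁ y)
    (hA : IntegrableOn A (Ioi 0))
    (hAnonneg : ∀ t ∈ Ioi (0:ℝ), 0 ≤ A t)
    (hAmass : (∫ t in Ioi (0:ℝ), A t) = muA)
    (hA₁ : ∀ u, A₁ u = (1 / muA) * ∫ t in (0:ℝ)..u, A t)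
    (hZdiff : ∀ u ∈ Ici (0:ℝ), HasDerivAt Z (Zd u) u)
    (hZdcont : ContinuousOn Zd (Ici 0))
    (hZ0 : Z 0 = 0)
    (hZbdd : ∃ C, ∀ u ∈ Ici (0:ℝ), |Z u| ≤ C)
    (hZdbdd : ∃ C, ∀ u ∈ Ici (0:ℝ), |Zd u| ≤ C)
    (hZeq : ∀ u ∈ Ici (0:ℝ),
      (c + r * u) * Z u
        = (r + alpha) * (∫ t in (0:ℝ)..u, Z t) - alpha * u
          + (lam * muA / phi0) * A₁ u - lam * mu * F₁ u
          + lam * mu * ∫ y in (0:ℝ)..u, Z (u - y) * f₁ y)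
    (hz : ∀ s ∈ Ioi (0:ℝ), z s = ∫ u in Ioi (0:ℝ), Real.exp (-s * u) * Zd u)
    (hf₁t : ∀ s ∈ Ioi (0:ℝ),
      f₁t s = ∫ u in Ioi (0:ℝ), Real.exp (-s * u) * f₁ u)
    (ha₁t : ∀ s ∈ Ioi (0:ℝ),
      a₁t s = (1 / muA) * ∫ u in Ioi (0:ℝ), Real.exp (-s * u) * A u) :
    (∀ s ∈ Ioi (0:ℝ), DifferentiableAt ℝ z s) ∧
    ∀ s ∈ Ioi (0:ℝ),
      c * z s - r * deriv z s
        = (alpha / s) * z s - alpha / s + (lam * muA / phi0) * a₁t s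
          - lam * mu * f₁t s + lam * mu * f₁t s * z s := by
  obtain ⟨CZ, hCZ⟩ := hZbdd
  obtain ⟨CD, hCD⟩ := hZdbdd
  have hZcont : ContinuousOn Z (Ici 0) := fun u hu => (hZdiff u hu).continuousAt.continuousWithinAt
  have hZm : AEStronglyMeasurable Z (volume.restrict (Ioi 0)) :=
    (hZcont.mono Ioi_subset_Ici_self).aestronglyMeasurable measurableSet_Ioi
  have hZdm : AEStronglyMeasurable Zd (volume.restrict (Ioi 0)) :=
    (hZdcont.mono Ioi_subset_Ici_self).aestronglyMeasurable measurableSet_Ioi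
  -- differentiability of z
  have hderiv : ∀ s ∈ Ioi (0:ℝ),
      HasDerivAt z (-(∫ u in Ioi (0:ℝ), Real.exp (-s * u) * (u * Zd u))) s := by
    intro s hs'
    have hs : 0 < s := hs'
    have iZd : IntegrableOn (fun u => Real.exp (-s * u) * Zd u) (Ioi 0) :=
      lap_aux_int_bdd hs hZdm (fun u hu => hCD u (mem_Ici.mpr (le_of_lt hu)))
    have key : HasDerivAt (fun x => ∫ u in Ioi (0:ℝ), Real.exp (-x * u) * Zd u)
        (∫ u in Ioi (0:ℝ), -(Real.exp (-s * u) * (u * Zd u))) s := by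
      refine (hasDerivAt_integral_of_dominated_loc_of_deriv_le (s := Metric.ball s (s / 2))
        (F := fun x u => Real.exp (-x * u) * Zd u)
        (F' := fun x u => -(Real.exp (-x * u) * (u * Zd u)))
        (bound := fun u => Real.exp (-(s / 2) * u) * (u * CD))
        (Metric.ball_mem_nhds s (half_pos hs))
        (Filter.Eventually.of_forall fun x =>
          ((Real.continuous_exp.comp (continuous_const.mul continuous_id)).aestronglyMeasurable).mul hZdm)
        iZd
        ((((Real.continuous_exp.comp (continuous_const.mul continuous_id)).aestronglyMeasurable).mul
          (continuous_id.aestronglyMeasurable.mul hZdm)).neg)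
        ?_ ?_ ?_).2
      · filter_upwards [ae_restrict_mem measurableSet_Ioi] with u hu
        intro x hx
        have hu0 : (0:ℝ) < u := hu
        have hx2 : s / 2 < x := by
          have := abs_sub_lt_iff.mp (mem_ball_iff_norm.mp hx)
          linarith [this.2]
        have h1 : ‖-(Real.exp (-x * u) * (u * Zd u))‖ = Real.exp (-x * u) * (u * |Zd u|) := by
          rw [norm_neg, norm_mul, norm_mul, Real.norm_eq_abs, Real.norm_eq_abs, Real.norm_eq_abs,
            abs_of_pos (Real.exp_pos _), abs_of_pos hu0]
        rw [h1]
        have e1 : Real.exp (-x * u) ≤ Real.exp (-(s / 2) * u) :=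
          Real.exp_le_exp.mpr (by nlinarith)
        have e2 : |Zd u| ≤ CD := hCD u hu0.le
        exact mul_le_mul e1 (mul_le_mul_of_nonneg_left e2 hu0.le)
          (mul_nonneg hu0.le (abs_nonneg _)) (Real.exp_pos _).le
      · exact lap_aux_int_wt (half_pos hs) aestronglyMeasurable_const (fun u _ => le_rfl)
      · refine Filter.Eventually.of_forall fun u => fun x hx => ?_
        have h1 : HasDerivAt (fun x : ℝ => -x * u) (-u) x := by
          simpa using ((hasDerivAt_id x).neg.mul_const u)
        have h2 := (h1.exp).mul_const (Zd u)
        exact h2.congr_deriv (by ring)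
    have hev : z =ᶠ[nhds s] fun x => ∫ u in Ioi (0:ℝ), Real.exp (-x * u) * Zd u :=
      Filter.eventuallyEq_of_mem (Ioi_mem_nhds hs) (fun x hx => hz x hx)
    have h3 := key.congr_of_eventuallyEq hev
    rwa [integral_neg] at h3
  constructor
  · exact fun s hs => (hderiv s hs).differentiableAt
  intro s hs'
  have hs : 0 < s := hs'
  have hsne : s ≠ 0 := ne_of_gt hs
  -- integrability facts
  have i1 : IntegrableOn (fun u : ℝ => Real.exp (-s * u) * (1:ℝ)) (Ioi 0) :=
    lap_aux_int_bdd (C := 1) hs aestronglyMeasurable_const (fun u _ => by norm_num)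
  have iZ : IntegrableOn (fun u => Real.exp (-s * u) * Z u) (Ioi 0) :=
    lap_aux_int_bdd hs hZm (fun u hu => hCZ u (mem_Ici.mpr (le_of_lt hu)))
  have iZd : IntegrableOn (fun u => Real.exp (-s * u) * Zd u) (Ioi 0) :=
    lap_aux_int_bdd hs hZdm (fun u hu => hCD u (mem_Ici.mpr (le_of_lt hu)))
  have itZd : IntegrableOn (fun u => Real.exp (-s * u) * (u * Zd u)) (Ioi 0) :=
    lap_aux_int_wt hs hZdm (fun u hu => hCD u (mem_Ici.mpr (le_of_lt hu)))
  have iuZ : IntegrableOn (fun u => Real.exp (-s * u) * (u * Z u)) (Ioi 0) :=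
    lap_aux_int_wt hs hZm (fun u hu => hCZ u (mem_Ici.mpr (le_of_lt hu)))
  have iZtZd : IntegrableOn (fun u => Real.exp (-s * u) * (Z u + u * Zd u)) (Ioi 0) := by
    have heq : (fun u => Real.exp (-s * u) * (Z u + u * Zd u))
        = fun u => Real.exp (-s * u) * Z u + Real.exp (-s * u) * (u * Zd u) := by
      funext u; ring
    rw [heq]; exact iZ.add itZd
  have if1e : IntegrableOn (fun u => Real.exp (-s * u) * f₁ u) (Ioi 0) := by
    refine Integrable.mono' hf₁.abs
      (((Real.continuous_exp.comp (continuous_const.mul continuous_id)).aestronglyMeasurable).mul hf₁.1) ?_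
    filter_upwards [ae_restrict_mem measurableSet_Ioi] with u hu
    have hu0 : (0:ℝ) < u := hu
    have h1 : ‖Real.exp (-s * u) * f₁ u‖ = Real.exp (-s * u) * |f₁ u| := by
      rw [norm_mul, Real.norm_eq_abs, Real.norm_eq_abs, abs_of_pos (Real.exp_pos _)]
    rw [h1]
    calc Real.exp (-s * u) * |f₁ u| ≤ 1 * |f₁ u| :=
          mul_le_mul_of_nonneg_right (Real.exp_le_one_iff.mpr (by nlinarith)) (abs_nonneg _)
      _ = |f₁ u| := one_mul _
  have iAe : IntegrableOn (fun u => Real.exp (-s * u) * A u) (Ioi 0) := by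
    refine Integrable.mono' hA.abs
      (((Real.continuous_exp.comp (continuous_const.mul continuous_id)).aestronglyMeasurable).mul hA.1) ?_
    filter_upwards [ae_restrict_mem measurableSet_Ioi] with u hu
    have hu0 : (0:ℝ) < u := hu
    have h1 : ‖Real.exp (-s * u) * A u‖ = Real.exp (-s * u) * |A u| := by
      rw [norm_mul, Real.norm_eq_abs, Real.norm_eq_abs, abs_of_pos (Real.exp_pos _)]
    rw [h1]
    calc Real.exp (-s * u) * |A u| ≤ 1 * |A u| :=
          mul_le_mul_of_nonneg_right (Real.exp_le_one_iff.mpr (by nlinarith)) (abs_nonneg _)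
      _ = |A u| := one_mul _
  -- FTC helpers
  have hFTC : ∀ x : ℝ, 0 < x → (∫ t in (0:ℝ)..x, Zd t) = Z x := by
    intro x hx
    have hsub : uIcc (0:ℝ) x ⊆ Ici 0 := by
      rw [uIcc_of_le hx.le]; exact fun t ht => ht.1
    have h := intervalIntegral.integral_eq_sub_of_hasDerivAt
      (fun t ht => hZdiff t (hsub ht)) ((hZdcont.mono hsub).intervalIntegrable)
    rw [h, hZ0, sub_zero]
  have hFTC2 : ∀ x : ℝ, 0 < x → (∫ t in (0:ℝ)..x, (Z t + t * Zd t)) = x * Z x := by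
    intro x hx
    have hsub : uIcc (0:ℝ) x ⊆ Ici 0 := by
      rw [uIcc_of_le hx.le]; exact fun t ht => ht.1
    have hd : ∀ t ∈ uIcc (0:ℝ) x, HasDerivAt (fun t => t * Z t) (Z t + t * Zd t) t := by
      intro t ht
      have := (hasDerivAt_id' t).mul (hZdiff t (hsub ht))
      simpa [add_comm, Pi.mul_def] using this
    have hint : IntervalIntegrable (fun t => Z t + t * Zd t) volume 0 x :=
      ((hZcont.mono hsub).add (continuousOn_id.mul (hZdcont.mono hsub))).intervalIntegrable
    have h := intervalIntegral.integral_eq_sub_of_hasDerivAt hd hint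
    rw [h, hZ0]; ring
  -- Laplace transform values
  have hE1 : ∫ u in Ioi (0:ℝ), Real.exp (-s * u) * Z u = z s * (1 / s) := by
    have h := lap_conv (φ := Zd) (ψ := fun _ => (1:ℝ)) iZd i1
    simp only [mul_one] at h
    rw [hz s hs', ← lap_integral_exp hs, ← h]
    exact setIntegral_congr_fun measurableSet_Ioi fun x hx => by rw [hFTC x hx]
  have hEtZ : ∫ u in Ioi (0:ℝ), Real.exp (-s * u) * (u * Z u)
      = (z s * (1 / s) + (∫ u in Ioi (0:ℝ), Real.exp (-s * u) * (u * Zd u))) * (1 / s) := by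
    have h := lap_conv (φ := fun t => Z t + t * Zd t) (ψ := fun _ => (1:ℝ)) iZtZd i1
    simp only [mul_one] at h
    have h2 : ∫ u in Ioi (0:ℝ), Real.exp (-s * u) * (Z u + u * Zd u)
        = z s * (1 / s) + (∫ u in Ioi (0:ℝ), Real.exp (-s * u) * (u * Zd u)) := by
      have heq : (fun u => Real.exp (-s * u) * (Z u + u * Zd u))
          = fun u => Real.exp (-s * u) * Z u + Real.exp (-s * u) * (u * Zd u) := by
        funext u; ring
      rw [heq, integral_add iZ itZd, hE1]
    rw [← h2, ← lap_integral_exp hs, ← h]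
    exact setIntegral_congr_fun measurableSet_Ioi fun x hx => by rw [hFTC2 x hx]
  have hEint : ∫ u in Ioi (0:ℝ), Real.exp (-s * u) * (∫ t in (0:ℝ)..u, Z t)
      = (z s * (1 / s)) * (1 / s) := by
    have h := lap_conv (φ := Z) (ψ := fun _ => (1:ℝ)) iZ i1
    simp only [mul_one] at h
    rw [h, hE1, lap_integral_exp hs]
  have hEu : ∫ u in Ioi (0:ℝ), Real.exp (-s * u) * u = (1 / s) * (1 / s) := by
    have h := lap_conv (φ := fun _ => (1:ℝ)) (ψ := fun _ => (1:ℝ)) i1 i1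
    simp only [mul_one, one_mul, intervalIntegral.integral_const, smul_eq_mul, sub_zero] at h
    rw [h, lap_integral_exp hs]
  have hEF1 : ∫ u in Ioi (0:ℝ), Real.exp (-s * u) * F₁ u = f₁t s * (1 / s) := by
    have h := lap_conv (φ := f₁) (ψ := fun _ => (1:ℝ)) if1e i1
    simp only [mul_one] at h
    rw [hf₁t s hs', ← lap_integral_exp hs, ← h]
    exact setIntegral_congr_fun measurableSet_Ioi fun x hx => by rw [hF₁ x]
  have hEA1 : ∫ u in Ioi (0:ℝ), Real.exp (-s * u) * A₁ u = a₁t s * (1 / s) := by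
    have h := lap_conv (φ := A) (ψ := fun _ => (1:ℝ)) iAe i1
    simp only [mul_one] at h
    have heq : (fun u => Real.exp (-s * u) * A₁ u)
        = fun u => (1 / muA) * (Real.exp (-s * u) * ∫ t in (0:ℝ)..u, A t) := by
      funext u; rw [hA₁ u]; ring
    rw [heq, integral_const_mul, h, ha₁t s hs', lap_integral_exp hs]
    ring
  have hEconv : ∫ u in Ioi (0:ℝ), Real.exp (-s * u) * (∫ y in (0:ℝ)..u, Z (u - y) * f₁ y)
      = f₁t s * (z s * (1 / s)) := by
    have h := lap_conv (φ := f₁) (ψ := Z) if1e iZ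
    rw [hf₁t s hs', ← hE1, ← h]
    refine setIntegral_congr_fun measurableSet_Ioi fun x hx => ?_
    congr 1
    exact intervalIntegral.integral_congr fun t ht => mul_comm _ _
  -- integrability of the RHS pieces
  have ig1 : IntegrableOn (fun u => Real.exp (-s * u) * ∫ t in (0:ℝ)..u, Z t) (Ioi 0) := by
    have h := lap_conv_int (φ := Z) (ψ := fun _ => (1:ℝ)) iZ i1
    simpa only [mul_one] using h
  have ig2 : IntegrableOn (fun u => Real.exp (-s * u) * u) (Ioi 0) := by
    have h := lap_aux_int_wt hs (g := fun _ => (1:ℝ)) aestronglyMeasurable_const (fun u _ => le_rfl)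
    simpa only [mul_one] using h
  have ig3 : IntegrableOn (fun u => Real.exp (-s * u) * A₁ u) (Ioi 0) := by
    have h := lap_conv_int (φ := A) (ψ := fun _ => (1:ℝ)) iAe i1
    simp only [mul_one] at h
    have heq : (fun u => Real.exp (-s * u) * A₁ u)
        = fun u => (1 / muA) * (Real.exp (-s * u) * ∫ t in (0:ℝ)..u, A t) := by
      funext u; rw [hA₁ u]; ring
    rw [heq]
    exact h.const_mul _
  have ig4 : IntegrableOn (fun u => Real.exp (-s * u) * F₁ u) (Ioi 0) := by
    have h := lap_conv_int (φ := f₁) (ψ := fun _ => (1:ℝ)) if1e i1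
    simp only [mul_one] at h
    have heq : (fun u => Real.exp (-s * u) * F₁ u)
        = fun u => Real.exp (-s * u) * ∫ t in (0:ℝ)..u, f₁ t := by
      funext u; rw [hF₁ u]
    rw [heq]
    exact h
  have ig5 : IntegrableOn
      (fun u => Real.exp (-s * u) * ∫ y in (0:ℝ)..u, Z (u - y) * f₁ y) (Ioi 0) := by
    have h := lap_conv_int (φ := f₁) (ψ := Z) if1e iZ
    have heq : (fun x => Real.exp (-s * x) * ∫ t in (0:ℝ)..x, f₁ t * Z (x - t))
        = fun x => Real.exp (-s * x) * ∫ y in (0:ℝ)..x, Z (x - y) * f₁ y := by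
      funext x; congr 1
      exact intervalIntegral.integral_congr fun t ht => mul_comm _ _
    rw [heq] at h
    exact h
  -- the transformed equation
  have hMain : ∫ u in Ioi (0:ℝ), Real.exp (-s * u) * ((c + r * u) * Z u)
      = ∫ u in Ioi (0:ℝ), Real.exp (-s * u) *
          ((r + alpha) * (∫ t in (0:ℝ)..u, Z t) - alpha * u
            + (lam * muA / phi0) * A₁ u - lam * mu * F₁ u
            + lam * mu * ∫ y in (0:ℝ)..u, Z (u - y) * f₁ y) :=
    setIntegral_congr_fun measurableSet_Ioi fun u hu => by rw [hZeq u (mem_Ici.mpr (le_of_lt hu))]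
  have hL : ∫ u in Ioi (0:ℝ), Real.exp (-s * u) * ((c + r * u) * Z u)
      = c * (z s * (1 / s))
        + r * ((z s * (1 / s) + (∫ u in Ioi (0:ℝ), Real.exp (-s * u) * (u * Zd u))) * (1 / s)) := by
    have heq : (fun u => Real.exp (-s * u) * ((c + r * u) * Z u))
        = fun u => c * (Real.exp (-s * u) * Z u) + r * (Real.exp (-s * u) * (u * Z u)) := by
      funext u; ring
    rw [heq, integral_add (iZ.const_mul c) (iuZ.const_mul r), integral_const_mul,
      integral_const_mul, hE1, hEtZ]
  have hR : ∫ u in Ioi (0:ℝ), Real.exp (-s * u) *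
        ((r + alpha) * (∫ t in (0:ℝ)..u, Z t) - alpha * u
          + (lam * muA / phi0) * A₁ u - lam * mu * F₁ u
          + lam * mu * ∫ y in (0:ℝ)..u, Z (u - y) * f₁ y)
      = (r + alpha) * ((z s * (1 / s)) * (1 / s)) - alpha * ((1 / s) * (1 / s))
        + (lam * muA / phi0) * (a₁t s * (1 / s)) - lam * mu * (f₁t s * (1 / s))
        + lam * mu * (f₁t s * (z s * (1 / s))) := by
    have heq : (fun u => Real.exp (-s * u) *
          ((r + alpha) * (∫ t in (0:ℝ)..u, Z t) - alpha * u
            + (lam * muA / phi0) * A₁ u - lam * mu * F₁ u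
            + lam * mu * ∫ y in (0:ℝ)..u, Z (u - y) * f₁ y))
        = fun u => (r + alpha) * (Real.exp (-s * u) * ∫ t in (0:ℝ)..u, Z t)
            - alpha * (Real.exp (-s * u) * u)
            + (lam * muA / phi0) * (Real.exp (-s * u) * A₁ u)
            - lam * mu * (Real.exp (-s * u) * F₁ u)
            + lam * mu * (Real.exp (-s * u) * ∫ y in (0:ℝ)..u, Z (u - y) * f₁ y) := by
      funext u; ring
    have h1 : IntegrableOn
        (fun u => (r + alpha) * (Real.exp (-s * u) * ∫ t in (0:ℝ)..u, Z t)) (Ioi 0) :=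
      ig1.const_mul _
    have h2 : IntegrableOn (fun u => alpha * (Real.exp (-s * u) * u)) (Ioi 0) :=
      ig2.const_mul _
    have h3 : IntegrableOn
        (fun u => (lam * muA / phi0) * (Real.exp (-s * u) * A₁ u)) (Ioi 0) :=
      ig3.const_mul _
    have h4 : IntegrableOn (fun u => lam * mu * (Real.exp (-s * u) * F₁ u)) (Ioi 0) :=
      ig4.const_mul _
    have h5 : IntegrableOn
        (fun u => lam * mu * (Real.exp (-s * u) * ∫ y in (0:ℝ)..u, Z (u - y) * f₁ y)) (Ioi 0) :=
      ig5.const_mul _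
    have h12 : IntegrableOn
        (fun u => (r + alpha) * (Real.exp (-s * u) * ∫ t in (0:ℝ)..u, Z t)
          - alpha * (Real.exp (-s * u) * u)) (Ioi 0) := h1.sub h2
    have h123 : IntegrableOn
        (fun u => (r + alpha) * (Real.exp (-s * u) * ∫ t in (0:ℝ)..u, Z t)
          - alpha * (Real.exp (-s * u) * u)
          + (lam * muA / phi0) * (Real.exp (-s * u) * A₁ u)) (Ioi 0) := h12.add h3
    have h1234 : IntegrableOn
        (fun u => (r + alpha) * (Real.exp (-s * u) * ∫ t in (0:ℝ)..u, Z t)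
          - alpha * (Real.exp (-s * u) * u)
          + (lam * muA / phi0) * (Real.exp (-s * u) * A₁ u)
          - lam * mu * (Real.exp (-s * u) * F₁ u)) (Ioi 0) := h123.sub h4
    rw [heq, integral_add h1234 h5, integral_sub h123 h4, integral_add h12 h3,
      integral_sub h1 h2,
      integral_const_mul, integral_const_mul, integral_const_mul, integral_const_mul,
      integral_const_mul, hEint, hEu, hEA1, hEF1, hEconv]
  have hE : c * (z s * (1 / s))
      + r * ((z s * (1 / s) + (∫ u in Ioi (0:ℝ), Real.exp (-s * u) * (u * Zd u))) * (1 / s))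
      = (r + alpha) * ((z s * (1 / s)) * (1 / s)) - alpha * ((1 / s) * (1 / s))
        + (lam * muA / phi0) * (a₁t s * (1 / s)) - lam * mu * (f₁t s * (1 / s))
        + lam * mu * (f₁t s * (z s * (1 / s))) := by
    rw [← hL, hMain, hR]
  have hDz : deriv z s = -(∫ u in Ioi (0:ℝ), Real.exp (-s * u) * (u * Zd u)) :=
    (hderiv s hs').deriv
  rw [hDz]
  have hst : s * (1 / s) = 1 := by field_simp
  linear_combination s * hE
    - (c * z s + r * (∫ u in Ioi (0:ℝ), Real.exp (-s * u) * (u * Zd u))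
        - alpha * (1 / s) * z s + alpha * (1 / s) - (lam * muA / phi0) * a₁t s
        + lam * mu * f₁t s - lam * mu * f₁t s * z s) * hst
end
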